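/- (Browder-type strong convergence, underlying Proposition 2.1.) Let H be a real Hilbert space, C a nonempty closed convex subset of H, T : C → C a nonexpansive map with Fix(T) ≠ ∅, and x ∈ C. Let (ξ_n) be the sequence in C determined by ξ_n = (1/n)·x + (1 − 1/n)·T(ξ_n) for n ≥ 1. Then (ξ_n) converges strongly to the point of Fix(T) nearest to x, i.e. to the metric projection of x onto the closed convex set Fix(T). -/

import Mathlib

open Filter RealInnerProductSpace

private lemma browder_mono_aux {H : Type*} [NormedAddCommGroup H] [InnerProductSpace ℝ H]
    {u v tu tv : H} (h : ‖tu - tv‖ ≤ ‖u - v‖) :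
    0 ≤ ⟪(u - tu) - (v - tv), u - v⟫ := by
  have h1 : ⟪tu - tv, u - v⟫ ≤ ‖u - v‖ * ‖u - v‖ := by
    calc ⟪tu - tv, u - v⟫ ≤ ‖tu - tv‖ * ‖u - v‖ := real_inner_le_norm _ _
    _ ≤ ‖u - v‖ * ‖u - v‖ := mul_le_mul_of_nonneg_right h (norm_nonneg _)
  have h2 : (u - tu) - (v - tv) = (u - v) - (tu - tv) := by abel
  rw [h2, inner_sub_left, real_inner_self_eq_norm_mul_norm]
  linarith

/-- Browder-type strong convergence to the nearest fixed point. -/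
theorem stmt11 {H : Type*} [NormedAddCommGroup H] [InnerProductSpace ℝ H] [CompleteSpace H]
    (C : Set H) (hC_ne : C.Nonempty) (hC_closed : IsClosed C) (hC_convex : Convex ℝ C)
    (T : H → H) (hT_maps : ∀ x ∈ C, T x ∈ C)
    (hT_nonexp : ∀ x ∈ C, ∀ y ∈ C, ‖T x - T y‖ ≤ ‖x - y‖)
    (hT_fix : ∃ p ∈ C, T p = p)
    (x : H) (hx : x ∈ C)
    (ξ : ℕ → H) (hξ_mem : ∀ n, ξ n ∈ C)
    (hξ_eq : ∀ n : ℕ, 1 ≤ n →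
      ξ n = (1 / (n : ℝ)) • x + (1 - 1 / (n : ℝ)) • T (ξ n)) :
    ∃ q, q ∈ C ∧ T q = q ∧ Tendsto ξ atTop (nhds q) ∧
      (∀ p ∈ C, T p = p → ‖x - q‖ ≤ ‖x - p‖) := by
  obtain ⟨p₀, hp₀C, hp₀T⟩ := hT_fix
  -- the key algebraic identity: (n-1) • (ξ n - T (ξ n)) = x - ξ n
  have key : ∀ n : ℕ, 2 ≤ n → ((n : ℝ) - 1) • (ξ n - T (ξ n)) = x - ξ n := by
    intro n hn
    have hn0 : (n : ℝ) ≠ 0 := Nat.cast_ne_zero.mpr (by omega)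
    have h := hξ_eq n (by omega)
    set y := T (ξ n) with hy
    rw [h]
    match_scalars <;> field_simp <;> ring
  -- boundedness : ‖x - ξ n‖ ≤ ‖x - p‖ for any fixed point p
  have hbound : ∀ p ∈ C, T p = p → ∀ n : ℕ, 2 ≤ n → ‖x - ξ n‖ ≤ ‖x - p‖ := by
    intro p hpC hpT n hn
    have hbn : (1 : ℝ) ≤ (n : ℝ) - 1 := by
      have : (2 : ℝ) ≤ (n : ℝ) := by exact_mod_cast hn
      linarith
    have hne := hT_nonexp (ξ n) (hξ_mem n) p hpC
    rw [hpT] at hne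
    have h1 : ((n : ℝ) - 1) • (T (ξ n) - p) = ((n : ℝ) - 1) • (ξ n - p) - (x - ξ n) := by
      rw [← key n hn]; module
    have h2 : ‖((n : ℝ) - 1) • (T (ξ n) - p)‖ ≤ ‖((n : ℝ) - 1) • (ξ n - p)‖ := by
      rw [norm_smul, norm_smul]
      exact mul_le_mul_of_nonneg_left hne (norm_nonneg _)
    have h3 : ‖((n : ℝ) - 1) • (ξ n - p) - (x - ξ n)‖ ^ 2 =
        ‖((n : ℝ) - 1) • (ξ n - p)‖ ^ 2 - 2 * ⟪((n : ℝ) - 1) • (ξ n - p), x - ξ n⟫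
          + ‖x - ξ n‖ ^ 2 := norm_sub_sq_real _ _
    rw [h1] at h2
    have h4 : ‖x - ξ n‖ ^ 2 ≤ 2 * ⟪((n : ℝ) - 1) • (ξ n - p), x - ξ n⟫ := by
      nlinarith [norm_nonneg (((n : ℝ) - 1) • (ξ n - p) - (x - ξ n)),
        norm_nonneg (((n : ℝ) - 1) • (ξ n - p))]
    rw [real_inner_smul_left] at h4
    have h5 : 0 ≤ ⟪ξ n - p, x - ξ n⟫ := by nlinarith [sq_nonneg ‖x - ξ n‖]
    have h6 : ‖x - ξ n‖ ^ 2 ≤ ⟪x - p, x - ξ n⟫ := by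
      have e : (x - p : H) = (x - ξ n) + (ξ n - p) := by abel
      rw [e, inner_add_left, real_inner_self_eq_norm_sq]
      linarith
    have h7 : ⟪x - p, x - ξ n⟫ ≤ ‖x - p‖ * ‖x - ξ n‖ := real_inner_le_norm _ _
    nlinarith [norm_nonneg (x - ξ n), norm_nonneg (x - p)]
  -- scalar inequality from monotonicity of I - T
  have scal : ∀ n m : ℕ, 2 ≤ n → 2 ≤ m →
      ((m : ℝ) - 1) * ‖x - ξ n‖ ^ 2 + ((n : ℝ) - 1) * ‖x - ξ m‖ ^ 2 ≤
        (((m : ℝ) - 1) + ((n : ℝ) - 1)) * ⟪x - ξ n, x - ξ m⟫ := by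
    intro n m hn hm
    have hbn : (1 : ℝ) ≤ (n : ℝ) - 1 := by
      have : (2 : ℝ) ≤ (n : ℝ) := by exact_mod_cast hn
      linarith
    have hbm : (1 : ℝ) ≤ (m : ℝ) - 1 := by
      have : (2 : ℝ) ≤ (m : ℝ) := by exact_mod_cast hm
      linarith
    have hmono := browder_mono_aux (hT_nonexp (ξ n) (hξ_mem n) (ξ m) (hξ_mem m))
    have h2 : 0 ≤ ⟪(((n : ℝ) - 1) * ((m : ℝ) - 1)) •
        ((ξ n - T (ξ n)) - (ξ m - T (ξ m))), ξ n - ξ m⟫ := by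
      rw [real_inner_smul_left]
      exact mul_nonneg (mul_nonneg (by linarith) (by linarith)) hmono
    have h3 : (((n : ℝ) - 1) * ((m : ℝ) - 1)) • ((ξ n - T (ξ n)) - (ξ m - T (ξ m))) =
        ((m : ℝ) - 1) • (x - ξ n) - ((n : ℝ) - 1) • (x - ξ m) := by
      rw [← key n hn, ← key m hm]; module
    rw [h3] at h2
    have h4 : (ξ n - ξ m : H) = (x - ξ m) - (x - ξ n) := by abel
    rw [h4] at h2
    set u := x - ξ n with hu
    set v := x - ξ m with hv
    simp only [inner_sub_left, inner_sub_right, real_inner_smul_left,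
      real_inner_self_eq_norm_sq, real_inner_comm u v] at h2
    linarith
  -- Cauchy-type estimate
  have cau : ∀ n m : ℕ, 2 ≤ n → n ≤ m →
      ‖ξ n - ξ m‖ ^ 2 ≤ ‖x - ξ m‖ ^ 2 - ‖x - ξ n‖ ^ 2 := by
    intro n m hn hnm
    rcases eq_or_lt_of_le hnm with rfl | hlt
    · simp
    have hm : 2 ≤ m := by omega
    have S := scal n m hn hm
    have hbn : (1 : ℝ) ≤ (n : ℝ) - 1 := by
      have : (2 : ℝ) ≤ (n : ℝ) := by exact_mod_cast hn
      linarith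
    have hbnm : (n : ℝ) - 1 < (m : ℝ) - 1 := by
      have : (n : ℝ) < (m : ℝ) := by exact_mod_cast hlt
      linarith
    have hnorm : ‖ξ n - ξ m‖ ^ 2 =
        ‖x - ξ n‖ ^ 2 + ‖x - ξ m‖ ^ 2 - 2 * ⟪x - ξ n, x - ξ m⟫ := by
      have e : (ξ n - ξ m : H) = (x - ξ m) - (x - ξ n) := by abel
      rw [e, norm_sub_sq_real, real_inner_comm]
      ring
    set bn := (n : ℝ) - 1
    set bm := (m : ℝ) - 1
    set Dn := ‖x - ξ n‖ ^ 2
    set Dm := ‖x - ξ m‖ ^ 2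
    set I := ⟪x - ξ n, x - ξ m⟫
    have hE : (0 : ℝ) ≤ ‖ξ n - ξ m‖ ^ 2 := sq_nonneg _
    have h4 : (bn + bm) * ‖ξ n - ξ m‖ ^ 2 ≤ (bm - bn) * (Dm - Dn) := by
      rw [hnorm]; nlinarith [S]
    have h5 : (0 : ℝ) ≤ (bm - bn) * (Dm - Dn) :=
      le_trans (mul_nonneg (by linarith) hE) h4
    have hF0 : (0 : ℝ) ≤ Dm - Dn := by nlinarith [h5, hbnm]
    have h6 : (bm - bn) * (Dm - Dn) ≤ (bn + bm) * (Dm - Dn) := by nlinarith [hF0, hbn]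
    have h7 : (bn + bm) * ‖ξ n - ξ m‖ ^ 2 ≤ (bn + bm) * (Dm - Dn) := le_trans h4 h6
    have hpos : (0 : ℝ) < bn + bm := by linarith
    linarith [(mul_le_mul_iff_right₀ hpos).mp h7]
  -- the monotone bounded sequence of squared distances
  set D : ℕ → ℝ := fun k => ‖x - ξ (k + 2)‖ ^ 2 with hD
  have hDmono : Monotone D := by
    intro a b hab
    have := cau (a + 2) (b + 2) (by omega) (by omega)
    have hE := sq_nonneg ‖ξ (a + 2) - ξ (b + 2)‖
    simp only [hD]
    linarith
  have hDbdd : BddAbove (Set.range D) := by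
    refine ⟨‖x - p₀‖ ^ 2, ?_⟩
    rintro _ ⟨k, rfl⟩
    have h := hbound p₀ hp₀C hp₀T (k + 2) (by omega)
    exact pow_le_pow_left₀ (norm_nonneg _) h 2
  have hDlim : Tendsto D atTop (nhds (⨆ k, D k)) := tendsto_atTop_ciSup hDmono hDbdd
  set L : ℝ := ⨆ k, D k with hL
  have hDleL : ∀ k, D k ≤ L := fun k => le_ciSup hDbdd k
  -- Cauchy sequence
  have hd : ∀ n m N : ℕ, N ≤ n → n ≤ m → ‖ξ (n + 2) - ξ (m + 2)‖ ≤ Real.sqrt (L - D N) := by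
    intro n m N hNn hnm
    have h1 := cau (n + 2) (m + 2) (by omega) (by omega)
    have h2 : D N ≤ D n := hDmono hNn
    have h3 : D m ≤ L := hDleL m
    calc ‖ξ (n + 2) - ξ (m + 2)‖ = Real.sqrt (‖ξ (n + 2) - ξ (m + 2)‖ ^ 2) :=
          (Real.sqrt_sq (norm_nonneg _)).symm
    _ ≤ Real.sqrt (L - D N) := by
        apply Real.sqrt_le_sqrt
        simp only [hD] at *
        linarith
  have hcauchy : CauchySeq (fun k => ξ (k + 2)) := by
    apply cauchySeq_of_le_tendsto_0 (b := fun N => Real.sqrt (L - D N))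
    · intro n m N hNn hNm
      rcases le_total n m with h | h
      · rw [dist_eq_norm]; exact hd n m N hNn h
      · rw [dist_comm, dist_eq_norm]; exact hd m n N hNm h
    · have h0 : Tendsto (fun N => L - D N) atTop (nhds 0) := by
        simpa using (tendsto_const_nhds (x := L)).sub hDlim
      have := (Real.continuous_sqrt.tendsto 0).comp h0
      simpa [Function.comp_def] using this
  obtain ⟨q, hq⟩ := cauchySeq_tendsto_of_complete hcauchy
  have hξq : Tendsto ξ atTop (nhds q) := (tendsto_add_atTop_iff_nat 2).mp hq
  have hqC : q ∈ C := hC_closed.mem_of_tendsto hξq (Eventually.of_forall hξ_mem)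
  -- T q = q
  have hdiff : Tendsto (fun n => ξ n - T (ξ n)) atTop (nhds 0) := by
    apply squeeze_zero_norm' (a := fun n : ℕ => ‖x - p₀‖ / ((n : ℝ) - 1))
    · filter_upwards [eventually_ge_atTop 2] with n hn
      have hbn : (1 : ℝ) ≤ (n : ℝ) - 1 := by
        have : (2 : ℝ) ≤ (n : ℝ) := by exact_mod_cast hn
        linarith
      have e := key n hn
      have hns : ‖x - ξ n‖ = ((n : ℝ) - 1) * ‖ξ n - T (ξ n)‖ := by
        rw [← e, norm_smul, Real.norm_eq_abs, abs_of_pos (by linarith)]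
      have hb := hbound p₀ hp₀C hp₀T n hn
      rw [le_div_iff₀ (by linarith)]
      nlinarith [norm_nonneg (ξ n - T (ξ n))]
    · apply Tendsto.div_atTop tendsto_const_nhds
      have : Tendsto (fun n : ℕ => (n : ℝ) + (-1)) atTop atTop :=
        tendsto_atTop_add_const_right atTop (-1) tendsto_natCast_atTop_atTop
      simpa [sub_eq_add_neg] using this
  have h1 : Tendsto (fun n => T (ξ n)) atTop (nhds q) := by
    have := hξq.sub hdiff
    simpa using this
  have h2 : Tendsto (fun n => T (ξ n)) atTop (nhds (T q)) := by
    rw [tendsto_iff_norm_sub_tendsto_zero]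
    apply squeeze_zero_norm (a := fun n => ‖ξ n - q‖)
    · intro n
      simpa using hT_nonexp (ξ n) (hξ_mem n) q hqC
    · exact tendsto_iff_norm_sub_tendsto_zero.mp hξq
  have hTq : T q = q := tendsto_nhds_unique h2 h1
  refine ⟨q, hqC, hTq, hξq, ?_⟩
  intro p hpC hpT
  have hnt : Tendsto (fun n => ‖x - ξ n‖) atTop (nhds ‖x - q‖) :=
    (tendsto_const_nhds.sub hξq).norm
  exact le_of_tendsto hnt (eventually_atTop.2 ⟨2, fun n hn => hbound p hpC hpT n hn⟩)
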